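/- If two general ellipsoids G_i and G_j (images of p-norm balls under invertible affine maps with rotation matrices) admit n ≠ 0 and γ ∈ ℝ satisfying ‖(R_i Q_i)ᵀ n‖_{q_i} ≤ ρ_iᵀ n − γ and ‖−(R_j Q_j)ᵀ n‖_{q_j} ≤ −ρ_jᵀ n + γ with strict inequality in at least one of the two, then G_i ∩ G_j = ∅. -/

import Mathlib

open Matrix BigOperators

/-- The p-norm on `Fin d → ℝ`. -/
noncomputable def pnorm {d : ℕ} (p : ℝ) (z : Fin d → ℝ) : ℝ :=
  (∑ i, |z i| ^ p) ^ (1 / p)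

lemma pnorm_neg' {d : ℕ} (p : ℝ) (z : Fin d → ℝ) : pnorm p (-z) = pnorm p z := by
  simp [pnorm]

lemma holder_aux {d : ℕ} {p q : ℝ} (hpq : Real.HolderConjugate p q)
    (z v : Fin d → ℝ) (hz : pnorm p z ≤ 1) : z ⬝ᵥ v ≤ pnorm q v := by
  have h := Real.inner_le_Lp_mul_Lq (Finset.univ) z v hpq
  have hq0 : (0:ℝ) ≤ pnorm q v :=
    Real.rpow_nonneg (Finset.sum_nonneg fun i _ =>
      Real.rpow_nonneg (abs_nonneg _) _) _
  calc z ⬝ᵥ v ≤ pnorm p z * pnorm q v := h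
    _ ≤ 1 * pnorm q v := mul_le_mul_of_nonneg_right hz hq0
    _ = pnorm q v := one_mul _

lemma holder_aux_lower {d : ℕ} {p q : ℝ} (hpq : Real.HolderConjugate p q)
    (z v : Fin d → ℝ) (hz : pnorm p z ≤ 1) : -(pnorm q v) ≤ z ⬝ᵥ v := by
  have h := holder_aux hpq z (-v) hz
  rw [pnorm_neg'] at h
  have : z ⬝ᵥ (-v) = -(z ⬝ᵥ v) := by simp
  linarith [this ▸ h]

lemma mulVec_dot {d : ℕ} (M : Matrix (Fin d) (Fin d) ℝ) (z w : Fin d → ℝ) :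
    (M *ᵥ z) ⬝ᵥ w = z ⬝ᵥ (Mᵀ *ᵥ w) := by
  rw [dotProduct_comm, Matrix.dotProduct_mulVec, ← Matrix.mulVec_transpose,
    dotProduct_comm]

/-- If the separating-hyperplane conditions hold with strict inequality in at
least one of the two, then the two general ellipsoids are disjoint. -/
theorem disjoint_of_strict_separation {d : ℕ} (pi pj qi qj : ℝ)
    (hpi : 1 < pi) (hpj : 1 < pj)
    (hqi : 1 / pi + 1 / qi = 1) (hqj : 1 / pj + 1 / qj = 1)
    (Ri Qi Rj Qj : Matrix (Fin d) (Fin d) ℝ)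
    (hRi : Riᵀ * Ri = 1 ∧ Ri.det = 1) (hRj : Rjᵀ * Rj = 1 ∧ Rj.det = 1)
    (hQi : IsUnit Qi.det) (hQj : IsUnit Qj.det)
    (ρi ρj : Fin d → ℝ) (n : Fin d → ℝ) (hn : n ≠ 0) (γ : ℝ)
    (Gi Gj : Set (Fin d → ℝ))
    (hGi : Gi = {y | ∃ x : Fin d → ℝ, pnorm pi (Qi⁻¹ *ᵥ x) ≤ 1 ∧ y = Ri *ᵥ x + ρi})
    (hGj : Gj = {y | ∃ x : Fin d → ℝ, pnorm pj (Qj⁻¹ *ᵥ x) ≤ 1 ∧ y = Rj *ᵥ x + ρj})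
    (hi : pnorm qi ((Ri * Qi)ᵀ *ᵥ n) ≤ ρi ⬝ᵥ n - γ)
    (hj : pnorm qj (-((Rj * Qj)ᵀ *ᵥ n)) ≤ -(ρj ⬝ᵥ n) + γ)
    (hstrict : pnorm qi ((Ri * Qi)ᵀ *ᵥ n) < ρi ⬝ᵥ n - γ ∨
      pnorm qj (-((Rj * Qj)ᵀ *ᵥ n)) < -(ρj ⬝ᵥ n) + γ) :
    Gi ∩ Gj = ∅ := by
  have hpqi : Real.HolderConjugate pi qi := Real.holderConjugate_iff.mpr ⟨hpi, by rw [← one_div, ← one_div]; exact hqi⟩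
  have hpqj : Real.HolderConjugate pj qj := Real.holderConjugate_iff.mpr ⟨hpj, by rw [← one_div, ← one_div]; exact hqj⟩
  rw [Set.eq_empty_iff_forall_notMem]
  rintro y ⟨hyi, hyj⟩
  rw [hGi] at hyi; rw [hGj] at hyj
  obtain ⟨xi, hxi, rfl⟩ := hyi
  obtain ⟨xj, hxj, hyeq⟩ := hyj
  -- key decompositions of y ⬝ᵥ n
  have hdi : (Ri *ᵥ xi + ρi) ⬝ᵥ n = (Qi⁻¹ *ᵥ xi) ⬝ᵥ ((Ri * Qi)ᵀ *ᵥ n) + ρi ⬝ᵥ n := by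
    have hx : Qi *ᵥ (Qi⁻¹ *ᵥ xi) = xi := by
      rw [Matrix.mulVec_mulVec, Matrix.mul_nonsing_inv _ hQi, Matrix.one_mulVec]
    calc (Ri *ᵥ xi + ρi) ⬝ᵥ n = (Ri *ᵥ xi) ⬝ᵥ n + ρi ⬝ᵥ n := add_dotProduct _ _ _
      _ = (Ri *ᵥ (Qi *ᵥ (Qi⁻¹ *ᵥ xi))) ⬝ᵥ n + ρi ⬝ᵥ n := by rw [hx]
      _ = ((Ri * Qi) *ᵥ (Qi⁻¹ *ᵥ xi)) ⬝ᵥ n + ρi ⬝ᵥ n := by rw [Matrix.mulVec_mulVec]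
      _ = (Qi⁻¹ *ᵥ xi) ⬝ᵥ ((Ri * Qi)ᵀ *ᵥ n) + ρi ⬝ᵥ n := by rw [mulVec_dot]
  have hdj : (Rj *ᵥ xj + ρj) ⬝ᵥ n = (Qj⁻¹ *ᵥ xj) ⬝ᵥ ((Rj * Qj)ᵀ *ᵥ n) + ρj ⬝ᵥ n := by
    have hx : Qj *ᵥ (Qj⁻¹ *ᵥ xj) = xj := by
      rw [Matrix.mulVec_mulVec, Matrix.mul_nonsing_inv _ hQj, Matrix.one_mulVec]
    calc (Rj *ᵥ xj + ρj) ⬝ᵥ n = (Rj *ᵥ xj) ⬝ᵥ n + ρj ⬝ᵥ n := add_dotProduct _ _ _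
      _ = (Rj *ᵥ (Qj *ᵥ (Qj⁻¹ *ᵥ xj))) ⬝ᵥ n + ρj ⬝ᵥ n := by rw [hx]
      _ = ((Rj * Qj) *ᵥ (Qj⁻¹ *ᵥ xj)) ⬝ᵥ n + ρj ⬝ᵥ n := by rw [Matrix.mulVec_mulVec]
      _ = (Qj⁻¹ *ᵥ xj) ⬝ᵥ ((Rj * Qj)ᵀ *ᵥ n) + ρj ⬝ᵥ n := by rw [mulVec_dot]
  -- bounds
  have hlo : -(pnorm qi ((Ri * Qi)ᵀ *ᵥ n)) ≤ (Qi⁻¹ *ᵥ xi) ⬝ᵥ ((Ri * Qi)ᵀ *ᵥ n) :=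
    holder_aux_lower hpqi _ _ hxi
  have hup : (Qj⁻¹ *ᵥ xj) ⬝ᵥ ((Rj * Qj)ᵀ *ᵥ n) ≤ pnorm qj (-((Rj * Qj)ᵀ *ᵥ n)) := by
    have := holder_aux hpqj (Qj⁻¹ *ᵥ xj) ((Rj * Qj)ᵀ *ᵥ n) hxj
    rwa [← pnorm_neg'] at this
  have hyn := congrArg (fun v => v ⬝ᵥ n) hyeq
  rw [hdi, hdj] at hyn
  rcases hstrict with h | h
  · linarith
  · linarith
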